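/- Common ancestor decomposition: let G^U ⊂ ℤ^d × (0,∞) × [0,1] be finite with pairwise distinct, strictly positive times, let G be its projection to ℤ^d × (0,∞), fix x ∈ ℤ^d and u ∈ [0,1], and set C := {(y,s) ∈ G : (x,0) <_G (y,s)} with C^U ⊂ G^U the corresponding labelled events. For η ∈ Ω put ξ := Ψ(η, G^U ∖ C^U). Then Ψ(η, G^U) = Ψ(ξ, C^U) and Ψ(Ψ(η,(x,u)), G^U) = Ψ(Ψ(ξ,(x,u)), C^U). -/

import Mathlib

/-- Sites of the lattice `ℤ^d`. -/
abbrev Site (d : ℕ) := Fin d → ℤ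

/-- Spin configurations on `ℤ^d`; `true` encodes spin `+1`, `false` encodes spin `-1`. -/
abbrev Config (d : ℕ) := Site d → Bool

/-- A labelled resampling event `(x, t, u)`: site, time, uniform label. -/
abbrev Event (d : ℕ) := Site d × ℝ × ℝ

/-- ℓ¹ distance on `ℤ^d`. -/
def dist1 {d : ℕ} (x y : Site d) : ℤ := ∑ i, |x i - y i|

/-- Single heat-bath resampling step `Ψ(η,(x,u))`. -/
noncomputable def step {d : ℕ} (cplus : Site d → Config d → ℝ) (η : Config d)
    (x : Site d) (u : ℝ) : Config d :=
  fun y => if y = x then (if u < cplus x η then true else false) else η y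

/-- `Ψ(η, G^U)` for a finite labelled event set, represented by a list of events which is
assumed to be sorted by (pairwise distinct) times: the resampling steps are applied
successively, front of the list (earliest time) first. -/
noncomputable def applyEvents {d : ℕ} (cplus : Site d → Config d → ℝ)
    (η : Config d) : List (Event d) → Config d
  | [] => η
  | e :: rest => applyEvents cplus (step cplus η e.1 e.2.2) rest

/-- The projection `G` of a labelled event set `G^U` onto `ℤ^d × [0,∞)`. -/
def projG {d : ℕ} (l : List (Event d)) : Set (Site d × ℝ) :=
  {p | ∃ u : ℝ, (p.1, p.2, u) ∈ l}

/-- The relation `<_G` on `ℤ^d × [0,∞)`. -/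
def rel {d : ℕ} (G : Set (Site d × ℝ)) (p q : Site d × ℝ) : Prop :=
  (p.1 = q.1 ∧ p.2 < q.2) ∨
  ∃ (K : ℕ) (c : Fin (K + 1) → Site d × ℝ),
    (∀ m, c m ∈ G) ∧
    p.2 < (c 0).2 ∧
    (∀ m : Fin K, (c m.castSucc).2 < (c m.succ).2) ∧
    (c (Fin.last K)).2 ≤ q.2 ∧
    dist1 (c 0).1 p.1 = 1 ∧
    (∀ m : Fin K, dist1 (c m.succ).1 (c m.castSucc).1 = 1) ∧
    (c (Fin.last K)).1 = q.1

lemma dist1_nonneg {d : ℕ} (x y : Site d) : 0 ≤ dist1 x y :=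
  Finset.sum_nonneg fun _ _ => abs_nonneg _

lemma dist1_symm {d : ℕ} (x y : Site d) : dist1 x y = dist1 y x :=
  Finset.sum_congr rfl fun i _ => abs_sub_comm _ _

lemma dist1_self {d : ℕ} (x : Site d) : dist1 x x = 0 := by simp [dist1]

lemma dist1_eq_zero {d : ℕ} {x y : Site d} (h : dist1 x y = 0) : x = y := by
  funext i
  have h2 := (Finset.sum_eq_zero_iff_of_nonneg (fun j _ => abs_nonneg (x j - y j))).mp h
    i (Finset.mem_univ i)
  have := abs_eq_zero.mp h2
  omega

lemma rel_base {d : ℕ} {G : Set (Site d × ℝ)} {x b : Site d} {tb : ℝ}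
    (hG : (b, tb) ∈ G) (ht : 0 < tb) (hd : dist1 b x ≤ 1) :
    rel G (x, (0:ℝ)) (b, tb) := by
  have h0 := dist1_nonneg b x
  rcases (by omega : dist1 b x = 0 ∨ dist1 b x = 1) with h | h
  · exact Or.inl ⟨(dist1_eq_zero h).symm, ht⟩
  · exact Or.inr ⟨0, fun _ => (b, tb), fun _ => hG, ht, fun m => m.elim0,
      le_refl _, h, fun m => m.elim0, rfl⟩

lemma rel_extend {d : ℕ} {G : Set (Site d × ℝ)} {x a b : Site d} {ta tb : ℝ}
    (h : rel G (x, (0:ℝ)) (a, ta)) (hG : (b, tb) ∈ G) (hlt : ta < tb)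
    (hd : dist1 b a ≤ 1) : rel G (x, (0:ℝ)) (b, tb) := by
  have h0 := dist1_nonneg b a
  rcases (by omega : dist1 b a = 0 ∨ dist1 b a = 1) with hd0 | hd1
  · have hba : b = a := dist1_eq_zero hd0
    subst hba
    rcases h with ⟨h1, h2⟩ | ⟨K, c, hmem, hstart, hinc, hend, hfirst, hsteps, hlastsite⟩
    · exact Or.inl ⟨h1, h2.trans hlt⟩
    · exact Or.inr ⟨K, c, hmem, hstart, hinc, hend.trans hlt.le, hfirst, hsteps, hlastsite⟩
  · rcases h with ⟨h1, h2⟩ | ⟨K, c, hmem, hstart, hinc, hend, hfirst, hsteps, hlastsite⟩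
    · refine Or.inr ⟨0, fun _ => (b, tb), fun _ => hG, h2.trans hlt, fun m => m.elim0,
        le_refl _, ?_, fun m => m.elim0, rfl⟩
      have hx : x = a := h1
      rw [show ((fun _ => (b, tb)) (0 : Fin 1)).1 = b from rfl, hx]
      exact hd1
    · refine Or.inr ⟨K + 1, Fin.snoc c (b, tb), ?_, ?_, ?_, ?_, ?_, ?_, ?_⟩
      · intro m
        refine Fin.lastCases ?_ ?_ m
        · rw [Fin.snoc_last]; exact hG
        · intro j; rw [Fin.snoc_castSucc]; exact hmem j
      · rw [show (0 : Fin (K + 1 + 1)) = (0 : Fin (K + 1)).castSucc from rfl,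
          Fin.snoc_castSucc]
        exact hstart
      · intro m
        refine Fin.lastCases ?_ ?_ m
        · rw [Fin.succ_last, Fin.snoc_last, Fin.snoc_castSucc]
          exact lt_of_le_of_lt hend hlt
        · intro j
          rw [Fin.succ_castSucc, Fin.snoc_castSucc, Fin.snoc_castSucc]
          exact hinc j
      · rw [Fin.snoc_last]
      · rw [show (0 : Fin (K + 1 + 1)) = (0 : Fin (K + 1)).castSucc from rfl,
          Fin.snoc_castSucc]
        exact hfirst
      · intro m
        refine Fin.lastCases ?_ ?_ m
        · rw [Fin.succ_last, Fin.snoc_last, Fin.snoc_castSucc, hlastsite]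
          exact hd1
        · intro j
          rw [Fin.succ_castSucc, Fin.snoc_castSucc, Fin.snoc_castSucc]
          exact hsteps j
      · rw [Fin.snoc_last]

lemma step_comm {d : ℕ} (cplus : Site d → Config d → ℝ)
    (hNN : ∀ (x : Site d) (η η' : Config d),
      (∀ y, dist1 y x = 1 → η y = η' y) → cplus x η = cplus x η')
    {a b : Site d} (hab : 2 ≤ dist1 a b) (η : Config d) (ua ub : ℝ) :
    step cplus (step cplus η a ua) b ub = step cplus (step cplus η b ub) a ua := by
  have hba : dist1 b a = dist1 a b := dist1_symm b a
  have hne : a ≠ b := by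
    intro h; rw [h, dist1_self] at hab; omega
  have h1 : cplus b (step cplus η a ua) = cplus b η := by
    apply hNN; intro z hz
    have hza : z ≠ a := by rintro rfl; omega
    simp [step, hza]
  have h2 : cplus a (step cplus η b ub) = cplus a η := by
    apply hNN; intro z hz
    have hzb : z ≠ b := by
      rintro rfl; rw [dist1_symm] at hz; omega
    simp [step, hzb]
  funext y
  by_cases hyb : y = b
  · subst hyb
    simp [step, Ne.symm hne, h1]
  · by_cases hya : y = a
    · subst hya
      simp [step, hne, h2]
    · simp [step, hya, hyb]

lemma applyEvents_comm_list {d : ℕ} (cplus : Site d → Config d → ℝ)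
    (hNN : ∀ (x : Site d) (η η' : Config d),
      (∀ y, dist1 y x = 1 → η y = η' y) → cplus x η = cplus x η')
    (x : Site d) (u : ℝ) :
    ∀ (D : List (Event d)) (η : Config d), (∀ e ∈ D, 2 ≤ dist1 x e.1) →
    applyEvents cplus (step cplus η x u) D = step cplus (applyEvents cplus η D) x u := by
  intro D
  induction D with
  | nil => intro η _; rfl
  | cons e D ih =>
    intro η hfar
    show applyEvents cplus (step cplus (step cplus η x u) e.1 e.2.2) D = _
    rw [step_comm cplus hNN (hfar e List.mem_cons_self) η u e.2.2]
    exact ih (step cplus η e.1 e.2.2) (fun b hb => hfar b (List.mem_cons_of_mem e hb))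

lemma applyEvents_split {d : ℕ} (cplus : Site d → Config d → ℝ)
    (hNN : ∀ (x : Site d) (η η' : Config d),
      (∀ y, dist1 y x = 1 → η y = η' y) → cplus x η = cplus x η')
    (p : Event d → Bool) :
    ∀ (l : List (Event d)) (η : Config d),
    l.Pairwise (fun a b => a.2.1 < b.2.1) →
    (∀ a ∈ l, ∀ b ∈ l, p a = true → p b = false → a.2.1 < b.2.1 → 2 ≤ dist1 a.1 b.1) →
    applyEvents cplus η l =
      applyEvents cplus (applyEvents cplus η (l.filter (fun e => !p e))) (l.filter p) := by
  intro l
  induction l with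
  | nil => intro η _ _; rfl
  | cons e rest ih =>
    intro η hsort hfar
    have hsort' := (List.pairwise_cons.mp hsort).2
    have hhd := (List.pairwise_cons.mp hsort).1
    have hfar' : ∀ a ∈ rest, ∀ b ∈ rest, p a = true → p b = false → a.2.1 < b.2.1 →
        2 ≤ dist1 a.1 b.1 := fun a ha b hb =>
      hfar a (List.mem_cons_of_mem e ha) b (List.mem_cons_of_mem e hb)
    cases hpe : p e with
    | false =>
      have hf1 : (e :: rest).filter (fun e => !p e) = e :: rest.filter (fun e => !p e) := by
        simp [List.filter_cons, hpe]
      have hf2 : (e :: rest).filter p = rest.filter p := by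
        simp [List.filter_cons, hpe]
      rw [hf1, hf2]
      show applyEvents cplus (step cplus η e.1 e.2.2) rest = _
      exact ih (step cplus η e.1 e.2.2) hsort' hfar'
    | true =>
      have hf1 : (e :: rest).filter (fun e => !p e) = rest.filter (fun e => !p e) := by
        simp [List.filter_cons, hpe]
      have hf2 : (e :: rest).filter p = e :: rest.filter p := by
        simp [List.filter_cons, hpe]
      rw [hf1, hf2]
      show applyEvents cplus (step cplus η e.1 e.2.2) rest =
        applyEvents cplus
          (step cplus (applyEvents cplus η (rest.filter (fun e => !p e))) e.1 e.2.2)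
          (rest.filter p)
      rw [← applyEvents_comm_list cplus hNN e.1 e.2.2 (rest.filter (fun e => !p e)) η ?_]
      · exact ih (step cplus η e.1 e.2.2) hsort' hfar'
      · intro b hb
        have hbr := (List.mem_filter.mp hb).1
        have hpb : p b = false := by
          have := (List.mem_filter.mp hb).2
          simpa using this
        exact hfar e List.mem_cons_self b (List.mem_cons_of_mem e hbr) hpe hpb
          (hhd b hbr)

open Classical in
lemma sublist_eq_filter {α : Type*} : ∀ {l s : List α}, s.Sublist l → l.Nodup →
    s = l.filter (fun e => decide (e ∈ s)) := by
  intro l s hs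
  induction hs with
  | slnil => intro _; rfl
  | @cons s' l' a h ih =>
    intro hn
    rw [List.filter_cons]
    have hns : a ∉ s' := fun hmem => (List.nodup_cons.mp hn).1 (h.subset hmem)
    simp only [hns, decide_false, Bool.false_eq_true, if_false]
    exact ih (List.nodup_cons.mp hn).2
  | @cons_cons s' l' a h ih =>
    intro hn
    rw [List.filter_cons]
    have ha : a ∈ a :: s' := List.mem_cons_self
    simp only [ha, decide_eq_true_eq, if_pos]
    congr 1
    rw [List.filter_congr (fun e he => ?_), ← ih (List.nodup_cons.mp hn).2]
    have hea : e ≠ a := fun h' => (List.nodup_cons.mp hn).1 (h' ▸ he)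
    simp [hea]

/-- Common ancestor decomposition: for a finite labelled event set `G^U` with pairwise
distinct strictly positive times (represented as a time-sorted list `l`), a site `x` and a
label `u ∈ [0,1]`, let `C^U` be the set of events `(y,s,u')` of `G^U` with
`(x,0) <_G (y,s)` and let `ξ := Ψ(η, G^U ∖ C^U)`. Then `Ψ(η, G^U) = Ψ(ξ, C^U)` and
`Ψ(Ψ(η,(x,u)), G^U) = Ψ(Ψ(ξ,(x,u)), C^U)`. -/
theorem stmt4 {d : ℕ} (hd : 1 ≤ d) (cplus : Site d → Config d → ℝ)
    (hrange : ∀ x η, cplus x η ∈ Set.Icc (0 : ℝ) 1)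
    (hNN : ∀ (x : Site d) (η η' : Config d),
      (∀ y, dist1 y x = 1 → η y = η' y) → cplus x η = cplus x η')
    (l : List (Event d))
    (hsort : l.Pairwise (fun a b => a.2.1 < b.2.1))
    (htime : ∀ e ∈ l, 0 < e.2.1)
    (hu' : ∀ e ∈ l, e.2.2 ∈ Set.Icc (0 : ℝ) 1)
    (x : Site d) (u : ℝ) (hu : u ∈ Set.Icc (0 : ℝ) 1)
    (Cu Du : List (Event d)) (hCu : Cu.Sublist l) (hDu : Du.Sublist l)
    (hCmem : ∀ e : Event d, e ∈ Cu ↔ (e ∈ l ∧ rel (projG l) (x, 0) (e.1, e.2.1)))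
    (hDmem : ∀ e : Event d, e ∈ Du ↔ (e ∈ l ∧ ¬ rel (projG l) (x, 0) (e.1, e.2.1)))
    (η : Config d) :
    applyEvents cplus η l = applyEvents cplus (applyEvents cplus η Du) Cu ∧
    applyEvents cplus (step cplus η x u) l =
      applyEvents cplus (step cplus (applyEvents cplus η Du) x u) Cu := by
  classical
  have hnd : l.Nodup := by
    refine hsort.imp ?_
    intro a b hab heq
    rw [heq] at hab
    exact lt_irrefl _ hab
  set P : Event d → Bool := fun e => decide (rel (projG l) (x, 0) (e.1, e.2.1)) with hP
  have hCuf : Cu = l.filter P := by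
    rw [sublist_eq_filter hCu hnd]
    refine List.filter_congr ?_
    intro e he
    simp only [hP, decide_eq_decide]
    rw [hCmem]
    exact ⟨fun h => h.2, fun h => ⟨he, h⟩⟩
  have hDuf : Du = l.filter (fun e => !P e) := by
    rw [sublist_eq_filter hDu hnd]
    refine List.filter_congr ?_
    intro e he
    simp only [hP, Bool.not_eq_true', ← decide_not, decide_eq_decide]
    rw [hDmem]
    exact ⟨fun h => h.2, fun h => ⟨he, h⟩⟩
  have hmemG : ∀ b ∈ l, (b.1, b.2.1) ∈ projG l := by
    intro b hb
    exact ⟨b.2.2, hb⟩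
  have hfar : ∀ a ∈ l, ∀ b ∈ l, P a = true → P b = false → a.2.1 < b.2.1 →
      2 ≤ dist1 a.1 b.1 := by
    intro a ha b hb hpa hpb hab
    have hra : rel (projG l) (x, 0) (a.1, a.2.1) := of_decide_eq_true hpa
    have hrb : ¬ rel (projG l) (x, 0) (b.1, b.2.1) := of_decide_eq_false hpb
    by_contra hle
    push_neg at hle
    have h0 := dist1_nonneg b.1 a.1
    have h0' := dist1_symm a.1 b.1
    exact hrb (rel_extend hra (hmemG b hb) hab (by omega))
  have hxfar : ∀ b ∈ l, P b = false → 2 ≤ dist1 x b.1 := by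
    intro b hb hpb
    have hrb : ¬ rel (projG l) (x, 0) (b.1, b.2.1) := of_decide_eq_false hpb
    by_contra hle
    push_neg at hle
    have h0 := dist1_nonneg x b.1
    have h0' := dist1_symm x b.1
    exact hrb (rel_base (hmemG b hb) (htime b hb) (by omega))
  constructor
  · rw [hCuf, hDuf]
    exact applyEvents_split cplus hNN P l η hsort hfar
  · rw [hCuf, hDuf]
    rw [← applyEvents_comm_list cplus hNN x u (l.filter (fun e => !P e)) η ?_]
    · exact applyEvents_split cplus hNN P l (step cplus η x u) hsort hfar
    · intro b hb
      have hbr := (List.mem_filter.mp hb).1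
      have hpb : P b = false := by
        have := (List.mem_filter.mp hb).2
        simpa using this
      exact hxfar b hbr hpb
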